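/- arXiv:2407.04891 — 2 statements merged into one kernel-verified Lean document; each statement's English description precedes it below -/
import Mathlib

section
/- Let S be a commutative ring, n ≥ 2, and 1 ≤ i ≤ n−1. Then the ring homomorphism φ = (μ, μ_s) : A → R × R, defined on pure tensors by r1 ⊗ r2 ↦ (r1·r2, r1·s_i(r2)), is injective (the Goresky–Kottwitz–MacPherson map for the elementary Bott–Samelson bimodule). -/
/- Common setup: substitution of multivariate power series, formal group laws,
formal inverses, and the variable–swapping operation. -/

open MvPowerSeries Finsupp

noncomputable section

variable {S : Type*} [CommRing S]

/-- Substitution of a family of multivariate power series (each intended to have zero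
constant coefficient) into a power series in `k` variables.  When every `a j` has zero
constant coefficient, the coefficient of a monomial `m` of the substituted series only
receives contributions from exponents `d` with `d j ≤ deg m`, so the finite sum below
computes the genuine substitution. -/
noncomputable def msubst {k n : ℕ} (a : Fin k → MvPowerSeries (Fin n) S)
    (F : MvPowerSeries (Fin k) S) : MvPowerSeries (Fin n) S :=
  fun m =>
    ∑ d ∈ Finset.Iic (equivFunOnFinite.symm fun _ : Fin k => m.sum fun _ e => e),
      MvPowerSeries.coeff (R := S) d F * MvPowerSeries.coeff (R := S) m (∏ j, a j ^ d j)

/-- `F ∈ S[[x,y]]` is a (one-dimensional, commutative) formal group law over `S`: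
zero constant coefficient, commutativity `F(x,y) = F(y,x)`, unitality `F(x,0) = x`,
and associativity `F(F(x,y),z) = F(x,F(y,z))`. -/
def IsFormalGroupLaw (F : MvPowerSeries (Fin 2) S) : Prop :=
  MvPowerSeries.constantCoeff (σ := Fin 2) (R := S) F = 0 ∧
  msubst ![(X 1 : MvPowerSeries (Fin 2) S), X 0] F = F ∧
  msubst ![(X 0 : MvPowerSeries (Fin 2) S), 0] F = X 0 ∧
  msubst ![msubst ![(X 0 : MvPowerSeries (Fin 3) S), X 1] F, X 2] F
    = msubst ![(X 0 : MvPowerSeries (Fin 3) S), msubst ![(X 1 : MvPowerSeries (Fin 3) S), X 2] F] F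

/-- `ι ∈ S[[x]]` is the formal inverse of `F`: it has zero constant coefficient
and `F(x, ι(x)) = 0`. -/
def IsFormalInverse (F : MvPowerSeries (Fin 2) S) (ι : MvPowerSeries (Fin 1) S) : Prop :=
  MvPowerSeries.constantCoeff (σ := Fin 1) (R := S) ι = 0 ∧
  msubst ![(X 0 : MvPowerSeries (Fin 1) S), ι] F = 0

/-- `ι(b)`, the substitution of `b` into the formal inverse `ι`. -/
noncomputable def fneg (ι : MvPowerSeries (Fin 1) S) {n : ℕ}
    (b : MvPowerSeries (Fin n) S) : MvPowerSeries (Fin n) S :=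
  msubst ![b] ι

/-- `a −_F b := F(a, ι(b))`. -/
noncomputable def fsub (F : MvPowerSeries (Fin 2) S) (ι : MvPowerSeries (Fin 1) S) {n : ℕ}
    (a b : MvPowerSeries (Fin n) S) : MvPowerSeries (Fin n) S :=
  msubst ![a, fneg ι b] F

/-- Substitution `g(a,b)` of two power series into a two-variable power series `g`. -/
noncomputable def gsub (g : MvPowerSeries (Fin 2) S) {n : ℕ}
    (a b : MvPowerSeries (Fin n) S) : MvPowerSeries (Fin n) S :=
  msubst ![a, b] g

/-- The map on multivariate power series interchanging the variables `x_i` and `x_j`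
(the renaming along the transposition `(i,j)`). -/
def swapVars {n : ℕ} (i j : Fin n) (f : MvPowerSeries (Fin n) S) :
    MvPowerSeries (Fin n) S :=
  fun m => f (equivMapDomain (Equiv.swap i j) m)

theorem swapVars_coeff {n : ℕ} (i j : Fin n) (f : MvPowerSeries (Fin n) S) (m : Fin n →₀ ℕ) :
    MvPowerSeries.coeff (R := S) m (swapVars i j f)
      = MvPowerSeries.coeff (R := S) (equivMapDomain (Equiv.swap i j) m) f := rfl

theorem equivMapDomain_swap_invol {n : ℕ} (i j : Fin n) (m : Fin n →₀ ℕ) :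
    equivMapDomain (Equiv.swap i j) (equivMapDomain (Equiv.swap i j) m) = m := by
  rw [← equivMapDomain_trans, Equiv.swap_swap, equivMapDomain_refl]

theorem equivMapDomain_add' {n : ℕ} (e : Fin n ≃ Fin n) (a b : Fin n →₀ ℕ) :
    equivMapDomain e (a + b) = equivMapDomain e a + equivMapDomain e b := by
  ext x; simp [equivMapDomain_apply]

theorem swapVars_add {n : ℕ} (i j : Fin n) (f h : MvPowerSeries (Fin n) S) :
    swapVars i j (f + h) = swapVars i j f + swapVars i j h := rfl

theorem swapVars_mul {n : ℕ} (i j : Fin n) (f h : MvPowerSeries (Fin n) S) :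
    swapVars i j (f * h) = swapVars i j f * swapVars i j h := by
  ext m
  rw [swapVars_coeff, MvPowerSeries.coeff_mul, MvPowerSeries.coeff_mul]
  refine Finset.sum_nbij'
    (fun p => (equivMapDomain (Equiv.swap i j) p.1, equivMapDomain (Equiv.swap i j) p.2))
    (fun p => (equivMapDomain (Equiv.swap i j) p.1, equivMapDomain (Equiv.swap i j) p.2))
    ?_ ?_ ?_ ?_ ?_
  · intro p hp
    rw [Finset.HasAntidiagonal.mem_antidiagonal] at hp ⊢
    rw [← equivMapDomain_add', hp, equivMapDomain_swap_invol]
  · intro p hp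
    rw [Finset.HasAntidiagonal.mem_antidiagonal] at hp ⊢
    rw [← equivMapDomain_add', hp]
  · intro p _; simp [equivMapDomain_swap_invol]
  · intro p _; simp [equivMapDomain_swap_invol]
  · intro p _
    rw [swapVars_coeff, swapVars_coeff, equivMapDomain_swap_invol, equivMapDomain_swap_invol]

theorem swapVars_C {n : ℕ} (i j : Fin n) (s : S) :
    swapVars i j (MvPowerSeries.C (σ := Fin n) (R := S) s) = MvPowerSeries.C (σ := Fin n) (R := S) s := by
  ext m
  rw [swapVars_coeff, MvPowerSeries.coeff_C, MvPowerSeries.coeff_C]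
  by_cases hm : m = 0
  · subst hm; rw [equivMapDomain_zero]
  · rw [if_neg, if_neg hm]
    intro hc
    apply hm
    have := congrArg (equivMapDomain (Equiv.swap i j)) hc
    rwa [equivMapDomain_swap_invol, equivMapDomain_zero] at this

theorem swapVars_one {n : ℕ} (i j : Fin n) :
    swapVars i j (1 : MvPowerSeries (Fin n) S) = 1 := by
  have := swapVars_C (S := S) i j 1
  rwa [map_one] at this

/-- The fixed subalgebra `R^{s_i}` of power series invariant under interchanging
the variables `x_i` and `x_j`. -/
noncomputable def fixedSubalgebra (S : Type*) [CommRing S] {n : ℕ} (i j : Fin n) :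
    Subalgebra S (MvPowerSeries (Fin n) S) where
  carrier := {f | swapVars i j f = f}
  mul_mem' := by
    intro a b ha hb
    simp only [Set.mem_setOf_eq] at *
    rw [swapVars_mul, ha, hb]
  add_mem' := by
    intro a b ha hb
    simp only [Set.mem_setOf_eq] at *
    rw [swapVars_add, ha, hb]
  algebraMap_mem' := fun s => swapVars_C i j s

/-- `s_i` as an algebra homomorphism over the fixed subalgebra. -/
noncomputable def swapAlgHom (S : Type*) [CommRing S] {n : ℕ} (i j : Fin n) :
    MvPowerSeries (Fin n) S →ₐ[fixedSubalgebra S i j] MvPowerSeries (Fin n) S where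
  toFun := swapVars i j
  map_one' := swapVars_one i j
  map_mul' := swapVars_mul i j
  map_zero' := rfl
  map_add' := swapVars_add i j
  commutes' := fun r => r.2

open TensorProduct in
/-- The elementary Bott–Samelson bimodule `A = R ⊗_{R^{s_i}} R`. -/
noncomputable abbrev BSB (S : Type*) [CommRing S] {n : ℕ} (i j : Fin n) : Type _ :=
  (MvPowerSeries (Fin n) S) ⊗[fixedSubalgebra S i j] (MvPowerSeries (Fin n) S)

/-- The multiplication map `μ : A → R`, `r1 ⊗ r2 ↦ r1·r2`. -/
noncomputable def mulHom (S : Type*) [CommRing S] {n : ℕ} (i j : Fin n) :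
    BSB S i j →ₐ[fixedSubalgebra S i j] MvPowerSeries (Fin n) S :=
  Algebra.TensorProduct.productMap (AlgHom.id _ _) (AlgHom.id _ _)

/-- The twisted multiplication map `μ_s : A → R`, `r1 ⊗ r2 ↦ r1·s_i(r2)`. -/
noncomputable def mulsHom (S : Type*) [CommRing S] {n : ℕ} (i j : Fin n) :
    BSB S i j →ₐ[fixedSubalgebra S i j] MvPowerSeries (Fin n) S :=
  Algebra.TensorProduct.productMap (AlgHom.id _ _) (swapAlgHom S i j)

open TensorProduct in
/-- The element `ξ = x_i⊗1 −_F 1⊗x_{i+1} := (g(x_i,x_j)⁻¹ ⊗ 1)·(1 ⊗ x_i − x_j ⊗ 1)` of `A`. -/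
noncomputable def xiElt (g : MvPowerSeries (Fin 2) S) {n : ℕ} (i j : Fin n) : BSB S i j :=
  (Ring.inverse (gsub g (X i) (X j)) ⊗ₜ[fixedSubalgebra S i j] (1 : MvPowerSeries (Fin n) S)) *
    ((1 : MvPowerSeries (Fin n) S) ⊗ₜ[fixedSubalgebra S i j] (X i)
      - (X j) ⊗ₜ[fixedSubalgebra S i j] (1 : MvPowerSeries (Fin n) S))

open TensorProduct in
/-- The element `ξ' = x_{i+1}⊗1 −_F 1⊗x_{i+1} := (g(x_j,x_i)⁻¹ ⊗ 1)·(1 ⊗ x_i − x_i ⊗ 1)` of `A`. -/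
noncomputable def xiElt' (g : MvPowerSeries (Fin 2) S) {n : ℕ} (i j : Fin n) : BSB S i j :=
  (Ring.inverse (gsub g (X j) (X i)) ⊗ₜ[fixedSubalgebra S i j] (1 : MvPowerSeries (Fin n) S)) *
    ((1 : MvPowerSeries (Fin n) S) ⊗ₜ[fixedSubalgebra S i j] (X i)
      - (X i) ⊗ₜ[fixedSubalgebra S i j] (1 : MvPowerSeries (Fin n) S))

/-- Update the exponents at `i` and `j`. -/
def sft {n : ℕ} (i j : Fin n) (m : Fin n →₀ ℕ) (p q : ℕ) : Fin n →₀ ℕ :=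
  (m.update i p).update j q

variable {n : ℕ} {i j : Fin n}

theorem sft_apply_i (hne : i ≠ j) (m : Fin n →₀ ℕ) (p q : ℕ) : sft i j m p q i = p := by
  simp [sft, Finsupp.coe_update, Function.update_apply, hne]

theorem sft_apply_j (m : Fin n →₀ ℕ) (p q : ℕ) : sft i j m p q j = q := by
  simp [sft, Finsupp.coe_update]

theorem sft_apply_ne (m : Fin n →₀ ℕ) (p q : ℕ) {k : Fin n} (hki : k ≠ i) (hkj : k ≠ j) :
    sft i j m p q k = m k := by
  simp [sft, Finsupp.coe_update, Function.update_apply, hki, hkj]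

theorem sft_self (m : Fin n →₀ ℕ) : sft i j m (m i) (m j) = m := by
  ext k
  by_cases hkj : k = j
  · subst hkj; rw [sft_apply_j]
  by_cases hki : k = i
  · subst hki
    simp [sft, Finsupp.coe_update, Function.update_apply, hkj]
  · rw [sft_apply_ne m _ _ hki hkj]

theorem sft_update_i (m : Fin n →₀ ℕ) (w p q : ℕ) :
    sft i j (m.update i w) p q = sft i j m p q := by
  ext k
  by_cases hkj : k = j
  · subst hkj; rw [sft_apply_j, sft_apply_j]
  by_cases hki : k = i
  · subst hki
    simp [sft, Finsupp.coe_update, Function.update_apply, hkj]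
  · rw [sft_apply_ne _ _ _ hki hkj, sft_apply_ne _ _ _ hki hkj,
      Finsupp.coe_update, Function.update_apply, if_neg hki]

theorem sft_update_j (m : Fin n →₀ ℕ) (w p q : ℕ) :
    sft i j (m.update j w) p q = sft i j m p q := by
  ext k
  by_cases hkj : k = j
  · subst hkj; rw [sft_apply_j, sft_apply_j]
  by_cases hki : k = i
  · subst hki
    simp [sft, Finsupp.coe_update, Function.update_apply, hkj]
  · rw [sft_apply_ne _ _ _ hki hkj, sft_apply_ne _ _ _ hki hkj,
      Finsupp.coe_update, Function.update_apply, if_neg hkj]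

theorem swap_sft (hij : i ≠ j) (m : Fin n →₀ ℕ) (p q : ℕ) :
    equivMapDomain (Equiv.swap i j) (sft i j m p q) = sft i j m q p := by
  ext k
  rw [equivMapDomain_apply]
  by_cases hkj : k = j
  · subst hkj
    rw [Equiv.symm_swap, Equiv.swap_apply_right, sft_apply_i hij, sft_apply_j]
  by_cases hki : k = i
  · subst hki
    rw [Equiv.symm_swap, Equiv.swap_apply_left, sft_apply_j, sft_apply_i hij]
  · rw [Equiv.symm_swap, Equiv.swap_apply_of_ne_of_ne hki hkj,
      sft_apply_ne _ _ _ hki hkj, sft_apply_ne _ _ _ hki hkj]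

theorem sub_single_i_eq_update (m : Fin n →₀ ℕ) (i : Fin n) :
    m - single i 1 = m.update i (m i - 1) := by
  ext k
  rw [Finsupp.tsub_apply, Finsupp.coe_update, Function.update_apply]
  by_cases hk : k = i
  · subst hk; rw [if_pos rfl, Finsupp.single_eq_same]
  · rw [if_neg hk, Finsupp.single_eq_of_ne' (fun h => hk h.symm), Nat.sub_zero]

theorem coeff_X_mul' (s : Fin n) (φ : MvPowerSeries (Fin n) S) (m : Fin n →₀ ℕ) :
    MvPowerSeries.coeff (R := S) m ((X s : MvPowerSeries (Fin n) S) * φ)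
      = if 1 ≤ m s then MvPowerSeries.coeff (R := S) (m - single s 1) φ else 0 := by
  rw [X, coeff_monomial_mul]
  by_cases h : single s 1 ≤ m
  · rw [if_pos h, if_pos, one_mul]
    exact (Finsupp.single_le_iff).mp h
  · rw [if_neg h, if_neg]
    intro hc
    exact h (Finsupp.single_le_iff.mpr hc)

theorem sub_X_regular (hij : i ≠ j) (q : MvPowerSeries (Fin n) S)
    (h : ((X i : MvPowerSeries (Fin n) S) - X j) * q = 0) : q = 0 := by
  have key : ∀ v : ℕ, ∀ m : Fin n →₀ ℕ, m j = v → MvPowerSeries.coeff (R := S) m q = 0 := by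
    intro v
    induction v with
    | zero =>
      intro m hm
      have h0 := congrArg (MvPowerSeries.coeff (R := S) (m + single i 1)) h
      rw [sub_mul, map_sub, coeff_X_mul', coeff_X_mul', map_zero] at h0
      have hii : ((m + single i 1 : Fin n →₀ ℕ)) i = m i + 1 := by
        rw [Finsupp.add_apply, Finsupp.single_eq_same]
      have hjj : ((m + single i 1 : Fin n →₀ ℕ)) j = m j := by
        rw [Finsupp.add_apply, Finsupp.single_eq_of_ne' hij, add_zero]
      rw [hii, hjj, hm, if_pos (by omega), if_neg (by omega), sub_zero,
        add_tsub_cancel_right] at h0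
      exact h0
    | succ v ih =>
      intro m hm
      have h0 := congrArg (MvPowerSeries.coeff (R := S) (m + single i 1)) h
      rw [sub_mul, map_sub, coeff_X_mul', coeff_X_mul', map_zero] at h0
      have hii : ((m + single i 1 : Fin n →₀ ℕ)) i = m i + 1 := by
        rw [Finsupp.add_apply, Finsupp.single_eq_same]
      have hjj : ((m + single i 1 : Fin n →₀ ℕ)) j = m j := by
        rw [Finsupp.add_apply, Finsupp.single_eq_of_ne' hij, add_zero]
      rw [hii, hjj, hm, if_pos (by omega), if_pos (by omega),
        add_tsub_cancel_right, sub_eq_zero] at h0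
      rw [h0]
      apply ih
      rw [Finsupp.tsub_apply, Finsupp.add_apply, Finsupp.single_eq_of_ne' hij,
        Finsupp.single_eq_same, hm, add_zero]
      omega
  ext m
  rw [map_zero]
  exact key (m j) m rfl

/-- The quotient of `g` by `X i - X j`. -/
def bdiv (i j : Fin n) (g : MvPowerSeries (Fin n) S) : MvPowerSeries (Fin n) S :=
  fun m => ∑ t ∈ Finset.range (m j + 1),
    MvPowerSeries.coeff (R := S) (sft i j m (m i + 1 + t) (m j - t)) g

theorem coeff_bdiv (g : MvPowerSeries (Fin n) S) (m : Fin n →₀ ℕ) :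
    MvPowerSeries.coeff (R := S) m (bdiv i j g)
      = ∑ t ∈ Finset.range (m j + 1),
          MvPowerSeries.coeff (R := S) (sft i j m (m i + 1 + t) (m j - t)) g := rfl

theorem bdiv_sub_i (hij : i ≠ j) (g : MvPowerSeries (Fin n) S) (m : Fin n →₀ ℕ)
    (hu : 1 ≤ m i) :
    MvPowerSeries.coeff (R := S) (m - single i 1) (bdiv i j g)
      = ∑ t ∈ Finset.range (m j + 1),
          MvPowerSeries.coeff (R := S) (sft i j m (m i + t) (m j - t)) g := by
  rw [sub_single_i_eq_update, coeff_bdiv]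
  have h1 : (m.update i (m i - 1)) j = m j := by
    rw [Finsupp.coe_update, Function.update_apply, if_neg (fun h => hij h.symm)]
  have h2 : (m.update i (m i - 1)) i = m i - 1 := by
    rw [Finsupp.coe_update, Function.update_self]
  simp only [h1, h2, sft_update_i, Nat.sub_add_cancel hu]

theorem bdiv_sub_j (hij : i ≠ j) (g : MvPowerSeries (Fin n) S) (m : Fin n →₀ ℕ) :
    MvPowerSeries.coeff (R := S) (m - single j 1) (bdiv i j g)
      = ∑ t ∈ Finset.range (m j - 1 + 1),
          MvPowerSeries.coeff (R := S) (sft i j m (m i + 1 + t) (m j - 1 - t)) g := by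
  rw [sub_single_i_eq_update, coeff_bdiv]
  have h1 : (m.update j (m j - 1)) j = m j - 1 := by
    rw [Finsupp.coe_update, Function.update_self]
  have h2 : (m.update j (m j - 1)) i = m i := by
    rw [Finsupp.coe_update, Function.update_apply, if_neg hij]
  simp only [h1, h2, sft_update_j]

theorem bdiv_spec (hij : i ≠ j) (g : MvPowerSeries (Fin n) S)
    (hg : ∀ m : Fin n →₀ ℕ, MvPowerSeries.coeff (R := S) (equivMapDomain (Equiv.swap i j) m) g
      = - MvPowerSeries.coeff (R := S) m g)
    (hd : ∀ m : Fin n →₀ ℕ, m i = m j → MvPowerSeries.coeff (R := S) m g = 0) :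
    ((X i : MvPowerSeries (Fin n) S) - X j) * bdiv i j g = g := by
  have hanti : ∀ (m : Fin n →₀ ℕ) (p q : ℕ),
      MvPowerSeries.coeff (R := S) (sft i j m q p) g = - MvPowerSeries.coeff (R := S) (sft i j m p q) g := by
    intro m p q
    rw [← swap_sft hij]
    exact hg _
  have hdiag : ∀ (m : Fin n →₀ ℕ) (p : ℕ),
      MvPowerSeries.coeff (R := S) (sft i j m p p) g = 0 := by
    intro m p
    exact hd _ (by rw [sft_apply_i hij, sft_apply_j])
  ext m
  rw [sub_mul, map_sub, coeff_X_mul', coeff_X_mul']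
  rcases Nat.eq_zero_or_pos (m i) with hu | hu
  · rcases Nat.eq_zero_or_pos (m j) with hv | hv
    · rw [if_neg (by omega), if_neg (by omega), sub_zero]
      exact (hd m (by omega)).symm
    · rw [if_neg (by omega), if_pos (show 1 ≤ m j by omega), bdiv_sub_j hij g m, zero_sub]
      obtain ⟨w, hw⟩ : ∃ w, m j = w + 1 := ⟨m j - 1, by omega⟩
      simp only [hw, hu, Nat.add_sub_cancel, Nat.zero_add]
      have hm : m = sft i j m 0 (w + 1) := by
        conv_lhs => rw [← sft_self (i := i) (j := j) m]
        rw [hu, hw]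
      conv_rhs => rw [hm]
      rw [hanti m (w + 1) 0, neg_inj, Finset.sum_range_succ]
      have hz : ∑ t ∈ Finset.range w,
          MvPowerSeries.coeff (R := S) (sft i j m (0 + 1 + t) (w - t)) g = 0 := by
        apply Finset.sum_involution (fun a _ => w - 1 - a)
        · intro a ha
          have ha' : a < w := Finset.mem_range.mp ha
          have e1 : 0 + 1 + (w - 1 - a) = w - a := by omega
          have e2 : w - (w - 1 - a) = 0 + 1 + a := by omega
          rw [e1, e2, hanti m (0 + 1 + a) (w - a)]
          simp
        · intro a ha hf
          intro hc
          apply hf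
          have ha' : a < w := Finset.mem_range.mp ha
          have : w - a = 0 + 1 + a := by omega
          rw [this, hdiag]
        · intro a ha
          have ha' : a < w := Finset.mem_range.mp ha
          exact Finset.mem_range.mpr (by omega)
        · intro a ha
          have ha' : a < w := Finset.mem_range.mp ha
          omega
      rw [hz, zero_add, show 0 + 1 + w = w + 1 by omega, Nat.sub_self]
  · rw [if_pos (show 1 ≤ m i from hu), bdiv_sub_i hij g m hu]
    rcases Nat.eq_zero_or_pos (m j) with hv | hv
    · rw [if_neg (by omega), sub_zero]
      simp only [hv, Nat.zero_add, Finset.sum_range_one, Nat.add_zero, Nat.sub_zero]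
      rw [show sft i j m (m i) 0 = m by rw [← hv, sft_self]]
    · rw [if_pos (show 1 ≤ m j by omega), bdiv_sub_j hij g m]
      obtain ⟨w, hw⟩ : ∃ w, m j = w + 1 := ⟨m j - 1, by omega⟩
      simp only [hw, Nat.add_sub_cancel]
      rw [Finset.sum_range_succ']
      have he : ∀ t : ℕ, sft i j m (m i + (t + 1)) (w + 1 - (t + 1))
          = sft i j m (m i + 1 + t) (w - t) := by
        intro t
        congr 1 <;> omega
      simp only [he, add_sub_cancel_left]
      rw [Nat.add_zero, Nat.sub_zero, show sft i j m (m i) (w + 1) = m by rw [← hw, sft_self]]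

section GKMAux

variable {n : ℕ} {i j : Fin n}

theorem swapVars_swapVars (f : MvPowerSeries (Fin n) S) :
    swapVars i j (swapVars i j f) = f := by
  ext m
  rw [swapVars_coeff, swapVars_coeff, equivMapDomain_swap_invol]

theorem swapAlgHom_apply (f : MvPowerSeries (Fin n) S) :
    swapAlgHom S i j f = swapVars i j f := rfl

theorem swapVars_sub (f h : MvPowerSeries (Fin n) S) :
    swapVars i j (f - h) = swapVars i j f - swapVars i j h := by
  rw [← swapAlgHom_apply, ← swapAlgHom_apply, ← swapAlgHom_apply, map_sub]

theorem swapVars_X_left (hij : i ≠ j) :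
    swapVars i j (X i : MvPowerSeries (Fin n) S) = X j := by
  classical
  ext m
  rw [swapVars_coeff, MvPowerSeries.coeff_X, MvPowerSeries.coeff_X]
  by_cases h : m = single j 1
  · subst h
    rw [if_pos rfl, if_pos]
    rw [Finsupp.equivMapDomain_single, Equiv.swap_apply_right]
  · rw [if_neg h, if_neg]
    intro hc
    apply h
    have := congrArg (equivMapDomain (Equiv.swap i j)) hc
    rw [equivMapDomain_swap_invol, Finsupp.equivMapDomain_single, Equiv.swap_apply_left] at this
    exact this

theorem swapVars_X_right (hij : i ≠ j) :
    swapVars i j (X j : MvPowerSeries (Fin n) S) = X i := by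
  classical
  ext m
  rw [swapVars_coeff, MvPowerSeries.coeff_X, MvPowerSeries.coeff_X]
  by_cases h : m = single i 1
  · subst h
    rw [if_pos rfl, if_pos]
    rw [Finsupp.equivMapDomain_single, Equiv.swap_apply_left]
  · rw [if_neg h, if_neg]
    intro hc
    apply h
    have := congrArg (equivMapDomain (Equiv.swap i j)) hc
    rw [equivMapDomain_swap_invol, Finsupp.equivMapDomain_single, Equiv.swap_apply_right] at this
    exact this

/-- Decomposition `f = a + b·x_i` with `a, b` symmetric. -/
theorem decomp (hij : i ≠ j) (f : MvPowerSeries (Fin n) S) :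
    ∃ a b : MvPowerSeries (Fin n) S,
      swapVars i j a = a ∧ swapVars i j b = b ∧ f = a + b * X i := by
  set g := f - swapVars i j f with hgdef
  have hswg : swapVars i j g = -g := by
    rw [hgdef, swapVars_sub, swapVars_swapVars, neg_sub]
  have hg : ∀ m : Fin n →₀ ℕ,
      MvPowerSeries.coeff (R := S) (equivMapDomain (Equiv.swap i j) m) g
        = - MvPowerSeries.coeff (R := S) m g := by
    intro m
    rw [← swapVars_coeff, hswg, map_neg]
  have hd : ∀ m : Fin n →₀ ℕ, m i = m j → MvPowerSeries.coeff (R := S) m g = 0 := by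
    intro m hm
    have hfix : equivMapDomain (Equiv.swap i j) m = m := by
      ext k
      rw [equivMapDomain_apply, Equiv.symm_swap]
      by_cases hki : k = i
      · subst hki; rw [Equiv.swap_apply_left, hm]
      by_cases hkj : k = j
      · subst hkj; rw [Equiv.swap_apply_right, hm]
      · rw [Equiv.swap_apply_of_ne_of_ne hki hkj]
    have := hg m
    rw [hfix] at this
    -- coeff m g = - coeff m g; but use the explicit form instead
    rw [hgdef, map_sub, swapVars_coeff, hfix, sub_self]
  have hb : ((X i : MvPowerSeries (Fin n) S) - X j) * bdiv i j g = g :=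
    bdiv_spec hij g hg hd
  set b := bdiv i j g with hbdef
  have hswb : swapVars i j b = b := by
    have h1 : ((X i : MvPowerSeries (Fin n) S) - X j) * swapVars i j b = g := by
      have h2 := congrArg (swapVars i j) hb
      rw [swapVars_mul, swapVars_sub, swapVars_X_left hij, swapVars_X_right hij, hswg] at h2
      have h3 : ((X i : MvPowerSeries (Fin n) S) - X j) * swapVars i j b
          = - ((X j - X i) * swapVars i j b) := by ring
      rw [h3, h2, neg_neg]
    have h4 : ((X i : MvPowerSeries (Fin n) S) - X j) * (swapVars i j b - b) = 0 := by
      rw [mul_sub, h1, hb, sub_self]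
    have := sub_X_regular hij _ h4
    exact sub_eq_zero.mp this
  refine ⟨f - b * X i, b, ?_, hswb, by ring⟩
  rw [swapVars_sub, swapVars_mul, hswb, swapVars_X_left hij]
  have : swapVars i j f = f - g := by rw [hgdef]; ring
  rw [this, ← hb]
  ring

set_option synthInstance.maxHeartbeats 1000000 in
open TensorProduct in
theorem tmul_fixed_mul (r c x : MvPowerSeries (Fin n) S) (hc : swapVars i j c = c) :
    r ⊗ₜ[fixedSubalgebra S i j] (c * x) = (r * c) ⊗ₜ[fixedSubalgebra S i j] x := by
  have hcm : c ∈ fixedSubalgebra S i j := hc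
  have h1 : c * x = (⟨c, hcm⟩ : fixedSubalgebra S i j) • x := by
    rw [Algebra.smul_def]
    rfl
  have h2 : r * c = (⟨c, hcm⟩ : fixedSubalgebra S i j) • r := by
    rw [Algebra.smul_def]
    rw [mul_comm]
    rfl
  rw [h1, h2, TensorProduct.tmul_smul, TensorProduct.smul_tmul']

open TensorProduct in
theorem exists_repr (hij : i ≠ j) (z : BSB S i j) :
    ∃ p q : MvPowerSeries (Fin n) S,
      z = p ⊗ₜ[fixedSubalgebra S i j] (1 : MvPowerSeries (Fin n) S)
        + q ⊗ₜ[fixedSubalgebra S i j] (X i : MvPowerSeries (Fin n) S) := by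
  induction z using TensorProduct.induction_on with
  | zero => exact ⟨0, 0, by simp⟩
  | tmul r1 r2 =>
    obtain ⟨a, b, ha, hb, hr⟩ := decomp hij r2
    refine ⟨r1 * a, r1 * b, ?_⟩
    rw [hr, TensorProduct.tmul_add]
    congr 1
    · rw [← tmul_fixed_mul r1 a 1 ha, mul_one]
    · rw [← tmul_fixed_mul r1 b (X i) hb]
  | add z1 z2 ih1 ih2 =>
    obtain ⟨p1, q1, h1⟩ := ih1
    obtain ⟨p2, q2, h2⟩ := ih2
    refine ⟨p1 + p2, q1 + q2, ?_⟩
    rw [h1, h2, TensorProduct.add_tmul, TensorProduct.add_tmul]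
    abel

end GKMAux

/-- the combined (GKM) map `(μ, μ_s) : R ⊗_{R^{s_i}} R → R × R`,
`r1 ⊗ r2 ↦ (r1·r2, r1·s_i(r2))`, is injective. -/
theorem gkm_injective
    {n : ℕ} (i j : Fin n) (hij : (i : ℕ) + 1 = (j : ℕ)) :
    Function.Injective (fun a : BSB S i j => (mulHom S i j a, mulsHom S i j a)) := by
  have hij' : i ≠ j := by
    intro h
    rw [h] at hij
    omega
  intro z1 z2 hz
  simp only [Prod.mk.injEq] at hz
  obtain ⟨p, q, hw⟩ := exists_repr hij' (z1 - z2)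
  have hmu : mulHom S i j (z1 - z2) = 0 := by rw [map_sub, hz.1, sub_self]
  have hms : mulsHom S i j (z1 - z2) = 0 := by rw [map_sub, hz.2, sub_self]
  rw [hw, map_add] at hmu hms
  have t1 : mulHom S i j (p ⊗ₜ[fixedSubalgebra S i j] (1 : MvPowerSeries (Fin n) S)) = p * 1 :=
    rfl
  have t2 : mulHom S i j (q ⊗ₜ[fixedSubalgebra S i j] (X i : MvPowerSeries (Fin n) S))
      = q * X i := rfl
  have t3 : mulsHom S i j (p ⊗ₜ[fixedSubalgebra S i j] (1 : MvPowerSeries (Fin n) S))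
      = p * swapVars i j 1 := rfl
  have t4 : mulsHom S i j (q ⊗ₜ[fixedSubalgebra S i j] (X i : MvPowerSeries (Fin n) S))
      = q * swapVars i j (X i) := rfl
  rw [t1, t2, mul_one] at hmu
  rw [t3, t4, swapVars_one, mul_one, swapVars_X_left hij'] at hms
  have hq0 : q = 0 := by
    apply sub_X_regular hij'
    have : ((X i : MvPowerSeries (Fin n) S) - X j) * q = (p + q * X i) - (p + q * X j) := by
      ring
    rw [this, hmu, hms, sub_self]
  have hp0 : p = 0 := by
    rw [hq0, zero_mul, add_zero] at hmu
    exact hmu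
  have : z1 - z2 = 0 := by
    rw [hw, hp0, hq0, TensorProduct.zero_tmul, TensorProduct.zero_tmul, add_zero]
  exact sub_eq_zero.mp this

end
end

section
/- Let S be a commutative ring, F a formal group law over S, n ≥ 2, and 1 ≤ i ≤ n−1. Then in A = R ⊗_{R^{s_i}} R, for every r ∈ R one has the exchange identities (r ⊗ 1)·ξ = (1 ⊗ r)·ξ and (r ⊗ 1)·ξ' = (1 ⊗ s_i(r))·ξ'; i.e. left multiplication across ξ equals right multiplication, and left multiplication across ξ' equals s_i-twisted right multiplication. -/
/- Common setup: substitution of multivariate power series, formal group laws,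
formal inverses, and the variable–swapping operation. -/

open MvPowerSeries Finsupp

noncomputable section

variable {S : Type*} [CommRing S]

open TensorProduct

namespace XiHelpers

open MvPowerSeries Finsupp

variable {S : Type*} [CommRing S] {n : ℕ}

/-- The exponent `f + s·e_i + t·e_j`. -/
noncomputable def Ee (i j : Fin n) (f : Fin n →₀ ℕ) (s t : ℕ) : Fin n →₀ ℕ :=
  f + Finsupp.single i s + Finsupp.single j t

variable {i j : Fin n}

theorem Ee_apply_i (hij : i ≠ j) (f : Fin n →₀ ℕ) (hfi : f i = 0) (s t : ℕ) :
    Ee i j f s t i = s := by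
  simp [Ee, hfi, Finsupp.single_eq_of_ne' (Ne.symm hij)]

theorem Ee_apply_j (hij : i ≠ j) (f : Fin n →₀ ℕ) (hfj : f j = 0) (s t : ℕ) :
    Ee i j f s t j = t := by
  simp [Ee, hfj, Finsupp.single_eq_of_ne' hij]

theorem Ee_apply_ne (f : Fin n →₀ ℕ) (s t : ℕ) {k : Fin n} (hki : k ≠ i) (hkj : k ≠ j) :
    Ee i j f s t k = f k := by
  simp [Ee, Finsupp.single_eq_of_ne' (Ne.symm hki), Finsupp.single_eq_of_ne' (Ne.symm hkj)]

theorem swap_Ee (hij : i ≠ j) (f : Fin n →₀ ℕ) (hfi : f i = 0) (hfj : f j = 0) (s t : ℕ) :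
    equivMapDomain (Equiv.swap i j) (Ee i j f s t) = Ee i j f t s := by
  ext k
  rw [Finsupp.equivMapDomain_apply, Equiv.symm_swap]
  by_cases hki : k = i
  · rw [hki, Equiv.swap_apply_left, Ee_apply_j hij f hfj, Ee_apply_i hij f hfi]
  by_cases hkj : k = j
  · rw [hkj, Equiv.swap_apply_right, Ee_apply_i hij f hfi, Ee_apply_j hij f hfj]
  · rw [Equiv.swap_apply_of_ne_of_ne hki hkj, Ee_apply_ne f s t hki hkj,
      Ee_apply_ne f t s hki hkj]

theorem m_eq_Ee (hij : i ≠ j) (m : Fin n →₀ ℕ) :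
    m = Ee i j ((m.erase j).erase i) (m i) (m j) := by
  ext k
  by_cases hki : k = i
  · rw [hki, Ee_apply_i hij _ (by simp) (m i) (m j)]
  by_cases hkj : k = j
  · rw [hkj, Ee_apply_j hij _ (by simp [Finsupp.erase_ne (Ne.symm hij)]) (m i) (m j)]
  · rw [Ee_apply_ne _ _ _ hki hkj, Finsupp.erase_ne hki, Finsupp.erase_ne hkj]

theorem erase_erase_Ee (hij : i ≠ j) (f : Fin n →₀ ℕ) (hfi : f i = 0) (hfj : f j = 0)
    (s t : ℕ) : ((Ee i j f s t).erase j).erase i = f := by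
  ext k
  by_cases hki : k = i
  · rw [hki]; simp [hfi]
  by_cases hkj : k = j
  · rw [hkj]; simp [Finsupp.erase_ne (Ne.symm hij), hfj]
  · rw [Finsupp.erase_ne hki, Finsupp.erase_ne hkj, Ee_apply_ne _ _ _ hki hkj]


/-- Coefficient of `r - s_i r` at `Ee i j f s t`. -/
noncomputable def Dc (i j : Fin n) (r : MvPowerSeries (Fin n) S) (f : Fin n →₀ ℕ)
    (s t : ℕ) : S :=
  MvPowerSeries.coeff (Ee i j f s t) (r - swapVars i j r)

theorem Dc_antisymm (hij : i ≠ j) (r : MvPowerSeries (Fin n) S) (f : Fin n →₀ ℕ)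
    (hfi : f i = 0) (hfj : f j = 0) (s t : ℕ) :
    Dc i j r f s t = - Dc i j r f t s := by
  unfold Dc
  rw [map_sub, map_sub, swapVars_coeff, swapVars_coeff, swap_Ee hij f hfi hfj,
    swap_Ee hij f hfi hfj]
  ring

theorem Dc_diag (hij : i ≠ j) (r : MvPowerSeries (Fin n) S) (f : Fin n →₀ ℕ)
    (hfi : f i = 0) (hfj : f j = 0) (s : ℕ) :
    Dc i j r f s s = 0 := by
  unfold Dc
  rw [map_sub, swapVars_coeff, swap_Ee hij f hfi hfj, sub_self]

theorem sum_Dc_zero (hij : i ≠ j) (r : MvPowerSeries (Fin n) S) (f : Fin n →₀ ℕ)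
    (hfi : f i = 0) (hfj : f j = 0) (N : ℕ) :
    ∑ u ∈ Finset.range (N + 1), Dc i j r f u (N - u) = 0 := by
  refine Finset.sum_involution (fun u _ => N - u) ?_ ?_ ?_ ?_
  · intro u hu
    have hu' : u ≤ N := Nat.lt_succ_iff.mp (Finset.mem_range.mp hu)
    show Dc i j r f u (N - u) + Dc i j r f (N - u) (N - (N - u)) = 0
    rw [Nat.sub_sub_self hu', Dc_antisymm hij r f hfi hfj u (N - u)]
    ring
  · intro u hu hne heq
    apply hne
    show Dc i j r f u (N - u) = 0
    have heq' : N - u = u := heq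
    rw [heq']
    exact Dc_diag hij r f hfi hfj u
  · intro u hu
    simp only [Finset.mem_range] at *
    omega
  · intro u hu
    have hu' : u ≤ N := Nat.lt_succ_iff.mp (Finset.mem_range.mp hu)
    show N - (N - u) = u
    omega

/-- The Demazure-type quotient `(r - s_i r)/(x_i - x_j)`. -/
noncomputable def bb (i j : Fin n) (r : MvPowerSeries (Fin n) S) :
    MvPowerSeries (Fin n) S :=
  fun m => ∑ u ∈ Finset.Icc (m i + 1) (m i + m j + 1),
    Dc i j r ((m.erase j).erase i) u (m i + m j + 1 - u)

theorem coeff_bb (hij : i ≠ j) (r : MvPowerSeries (Fin n) S) (f : Fin n →₀ ℕ)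
    (hfi : f i = 0) (hfj : f j = 0) (s t : ℕ) :
    MvPowerSeries.coeff (Ee i j f s t) (bb i j r)
      = ∑ u ∈ Finset.Icc (s + 1) (s + t + 1), Dc i j r f u (s + t + 1 - u) := by
  show (∑ u ∈ Finset.Icc ((Ee i j f s t) i + 1) ((Ee i j f s t) i + (Ee i j f s t) j + 1),
    Dc i j r (((Ee i j f s t).erase j).erase i) u
      ((Ee i j f s t) i + (Ee i j f s t) j + 1 - u)) = _
  rw [Ee_apply_i hij f hfi, Ee_apply_j hij f hfj, erase_erase_Ee hij f hfi hfj]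

theorem shift_sum_Dc (hij : i ≠ j) (r : MvPowerSeries (Fin n) S) (f : Fin n →₀ ℕ)
    (hfi : f i = 0) (hfj : f j = 0) {a b N : ℕ} (hab : a + b + 1 = N) :
    ∑ u ∈ Finset.Ico 0 (a + 1), Dc i j r f u (N - u)
      = - ∑ u ∈ Finset.Ico (b + 1) (N + 1), Dc i j r f u (N - u) := by
  rw [← Finset.sum_neg_distrib]
  refine Finset.sum_nbij' (fun u => N - u) (fun u => N - u) ?_ ?_ ?_ ?_ ?_
  · intro u hu
    simp only [Finset.mem_Ico] at hu ⊢
    omega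
  · intro u hu
    simp only [Finset.mem_Ico] at hu ⊢
    omega
  · intro u hu
    simp only [Finset.mem_Ico] at hu
    show N - (N - u) = u
    omega
  · intro u hu
    simp only [Finset.mem_Ico] at hu
    show N - (N - u) = u
    omega
  · intro u hu
    simp only [Finset.mem_Ico] at hu
    show Dc i j r f u (N - u) = - Dc i j r f (N - u) (N - (N - u))
    have h1 : N - (N - u) = u := by omega
    rw [h1]
    exact Dc_antisymm hij r f hfi hfj u (N - u)

theorem sum_Ico_Dc_zero (hij : i ≠ j) (r : MvPowerSeries (Fin n) S) (f : Fin n →₀ ℕ)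
    (hfi : f i = 0) (hfj : f j = 0) (N : ℕ) :
    ∑ u ∈ Finset.Ico 0 (N + 1), Dc i j r f u (N - u) = 0 := by
  rw [← Finset.range_eq_Ico]
  exact sum_Dc_zero hij r f hfi hfj N

theorem swap_bb (hij : i ≠ j) (r : MvPowerSeries (Fin n) S) :
    swapVars i j (bb i j r) = bb i j r := by
  ext m
  rw [swapVars_coeff]
  obtain ⟨f, hfi, hfj, hm⟩ : ∃ f, f i = 0 ∧ f j = 0 ∧ m = Ee i j f (m i) (m j) :=
    ⟨(m.erase j).erase i, by simp, by simp [Finsupp.erase_ne (Ne.symm hij)], m_eq_Ee hij m⟩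
  set a := m i
  set c := m j
  rw [hm, swap_Ee hij f hfi hfj, coeff_bb hij r f hfi hfj, coeff_bb hij r f hfi hfj]
  have hN : c + a + 1 = a + c + 1 := by omega
  rw [hN]
  set N := a + c + 1 with hNdef
  have hIcc1 : Finset.Icc (c + 1) N = Finset.Ico (c + 1) (N + 1) :=
    (Finset.Ico_add_one_right_eq_Icc _ _).symm
  have hIcc2 : Finset.Icc (a + 1) N = Finset.Ico (a + 1) (N + 1) :=
    (Finset.Ico_add_one_right_eq_Icc _ _).symm
  rw [hIcc1, hIcc2]
  have hs1 : ∑ u ∈ Finset.Ico 0 (a + 1), Dc i j r f u (N - u)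
      = - ∑ u ∈ Finset.Ico (c + 1) (N + 1), Dc i j r f u (N - u) :=
    shift_sum_Dc hij r f hfi hfj (a := a) (b := c) (N := N) (by omega)
  have hsplit : ∑ u ∈ Finset.Ico 0 (a + 1), Dc i j r f u (N - u)
      + ∑ u ∈ Finset.Ico (a + 1) (N + 1), Dc i j r f u (N - u)
      = ∑ u ∈ Finset.Ico 0 (N + 1), Dc i j r f u (N - u) :=
    Finset.sum_Ico_consecutive _ (by omega) (by omega)
  have hzero := sum_Ico_Dc_zero hij r f hfi hfj N
  linear_combination hs1 - hsplit - hzero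


theorem swap_X (hij : i ≠ j) :
    swapVars i j (MvPowerSeries.X i : MvPowerSeries (Fin n) S) = MvPowerSeries.X j := by
  classical
  ext m
  rw [swapVars_coeff, MvPowerSeries.coeff_X, MvPowerSeries.coeff_X]
  by_cases h : m = Finsupp.single j 1
  · rw [if_pos, if_pos h]
    rw [h, Finsupp.equivMapDomain_single, Equiv.swap_apply_right]
  · rw [if_neg, if_neg h]
    intro hc
    apply h
    have := congrArg (equivMapDomain (Equiv.swap i j)) hc
    rw [equivMapDomain_swap_invol, Finsupp.equivMapDomain_single,
      Equiv.swap_apply_left] at this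
    exact this

theorem Ee_sub_single_i (hij : i ≠ j) (f : Fin n →₀ ℕ) (hfi : f i = 0) (hfj : f j = 0)
    (s t : ℕ) (hs : 1 ≤ s) :
    Ee i j f s t - Finsupp.single i 1 = Ee i j f (s - 1) t := by
  ext k
  rw [Finsupp.tsub_apply]
  by_cases hki : k = i
  · rw [hki, Ee_apply_i hij f hfi, Ee_apply_i hij f hfi, Finsupp.single_eq_same]
  by_cases hkj : k = j
  · rw [hkj, Ee_apply_j hij f hfj, Ee_apply_j hij f hfj,
      Finsupp.single_eq_of_ne' hij]
    omega
  · rw [Ee_apply_ne f s t hki hkj, Ee_apply_ne f (s-1) t hki hkj,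
      Finsupp.single_eq_of_ne' fun h => hki h.symm]
    omega

theorem Ee_sub_single_j (hij : i ≠ j) (f : Fin n →₀ ℕ) (hfi : f i = 0) (hfj : f j = 0)
    (s t : ℕ) (ht : 1 ≤ t) :
    Ee i j f s t - Finsupp.single j 1 = Ee i j f s (t - 1) := by
  ext k
  rw [Finsupp.tsub_apply]
  by_cases hki : k = i
  · rw [hki, Ee_apply_i hij f hfi, Ee_apply_i hij f hfi,
      Finsupp.single_eq_of_ne' fun h => hij h.symm]
    omega
  by_cases hkj : k = j
  · rw [hkj, Ee_apply_j hij f hfj, Ee_apply_j hij f hfj, Finsupp.single_eq_same]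
  · rw [Ee_apply_ne f s t hki hkj, Ee_apply_ne f s (t-1) hki hkj,
      Finsupp.single_eq_of_ne' fun h => hkj h.symm]
    omega

theorem single_le_Ee_i (hij : i ≠ j) (f : Fin n →₀ ℕ) (hfi : f i = 0) (s t : ℕ) :
    Finsupp.single i 1 ≤ Ee i j f s t ↔ 1 ≤ s := by
  rw [Finsupp.single_le_iff, Ee_apply_i hij f hfi]

theorem single_le_Ee_j (hij : i ≠ j) (f : Fin n →₀ ℕ) (hfj : f j = 0) (s t : ℕ) :
    Finsupp.single j 1 ≤ Ee i j f s t ↔ 1 ≤ t := by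
  rw [Finsupp.single_le_iff, Ee_apply_j hij f hfj]

theorem coeff_Ee_bb_mul (hij : i ≠ j) (r : MvPowerSeries (Fin n) S) (f : Fin n →₀ ℕ)
    (hfi : f i = 0) (hfj : f j = 0) (s t : ℕ) :
    MvPowerSeries.coeff (Ee i j f s t)
        (bb i j r * (MvPowerSeries.X i - MvPowerSeries.X j)) = Dc i j r f s t := by
  classical
  rw [mul_sub, map_sub, MvPowerSeries.X_def, MvPowerSeries.X_def,
    MvPowerSeries.coeff_mul_monomial, MvPowerSeries.coeff_mul_monomial]
  rcases Nat.eq_zero_or_pos s with hs | hs <;> rcases Nat.eq_zero_or_pos t with ht | ht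
  · rw [if_neg, if_neg]
    · rw [hs, ht, Dc_diag hij r f hfi hfj, sub_zero]
    · rw [single_le_Ee_j hij f hfj]; omega
    · rw [single_le_Ee_i hij f hfi]; omega
  · -- s = 0, t ≥ 1
    rw [if_neg, if_pos]
    · rw [Ee_sub_single_j hij f hfi hfj s t ht, coeff_bb hij r f hfi hfj, mul_one]
      subst hs
      have h1 : 0 + (t - 1) + 1 = t := by omega
      rw [h1]
      have hzero := sum_Ico_Dc_zero hij r f hfi hfj t
      have hbot : ∑ u ∈ Finset.Ico 0 (t + 1), Dc i j r f u (t - u)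
          = Dc i j r f 0 (t - 0) + ∑ u ∈ Finset.Ico 1 (t + 1), Dc i j r f u (t - u) :=
        Finset.sum_eq_sum_Ico_succ_bot (by omega) _
      have hIcc : Finset.Icc (0 + 1) t = Finset.Ico 1 (t + 1) := (Finset.Ico_add_one_right_eq_Icc _ _).symm
      rw [hIcc]
      have h0 : t - 0 = t := by omega
      rw [h0] at hbot
      linear_combination hbot - hzero
    · exact (single_le_Ee_j hij f hfj s t).mpr ht
    · rw [single_le_Ee_i hij f hfi]; omega
  · -- s ≥ 1, t = 0
    rw [if_pos, if_neg]
    · rw [Ee_sub_single_i hij f hfi hfj s t hs, coeff_bb hij r f hfi hfj, mul_one, sub_zero]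
      subst ht
      have h1 : s - 1 + 1 = s := by omega
      rw [h1, Finset.Icc_self, Finset.sum_singleton]
      have h3 : s - s = 0 := by omega
      rw [h3]
    · rw [single_le_Ee_j hij f hfj]; omega
    · exact (single_le_Ee_i hij f hfi s t).mpr hs
  · -- s ≥ 1, t ≥ 1
    rw [if_pos, if_pos]
    · rw [Ee_sub_single_i hij f hfi hfj s t hs, Ee_sub_single_j hij f hfi hfj s t ht,
        coeff_bb hij r f hfi hfj, coeff_bb hij r f hfi hfj, mul_one, mul_one]
      have h1 : s - 1 + 1 = s := by omega
      have h2 : s - 1 + t + 1 = s + t := by omega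
      have h3 : s + (t - 1) + 1 = s + t := by omega
      rw [h1, h2, h3]
      have hIcc1 : Finset.Icc s (s + t) = Finset.Ico s (s + t + 1) :=
        (Finset.Ico_add_one_right_eq_Icc _ _).symm
      have hIcc2 : Finset.Icc (s + 1) (s + t) = Finset.Ico (s + 1) (s + t + 1) :=
        (Finset.Ico_add_one_right_eq_Icc _ _).symm
      rw [hIcc1, hIcc2]
      have hbot : ∑ u ∈ Finset.Ico s (s + t + 1), Dc i j r f u (s + t - u)
          = Dc i j r f s (s + t - s) + ∑ u ∈ Finset.Ico (s + 1) (s + t + 1), Dc i j r f u (s + t - u) :=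
        Finset.sum_eq_sum_Ico_succ_bot (by omega) _
      have h4 : s + t - s = t := by omega
      rw [h4] at hbot
      linear_combination hbot
    · exact (single_le_Ee_j hij f hfj s t).mpr ht
    · exact (single_le_Ee_i hij f hfi s t).mpr hs

theorem bb_mul_sub (hij : i ≠ j) (r : MvPowerSeries (Fin n) S) :
    bb i j r * (MvPowerSeries.X i - MvPowerSeries.X j) = r - swapVars i j r := by
  ext m
  rw [m_eq_Ee hij m]
  exact coeff_Ee_bb_mul hij r _ (by simp) (by simp [Finsupp.erase_ne (Ne.symm hij)]) _ _


theorem swap_sub (i j : Fin n) (f h : MvPowerSeries (Fin n) S) :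
    swapVars i j (f - h) = swapVars i j f - swapVars i j h := rfl

theorem swap_aa (hij : i ≠ j) (r : MvPowerSeries (Fin n) S) :
    swapVars i j (r - bb i j r * MvPowerSeries.X i)
      = r - bb i j r * MvPowerSeries.X i := by
  rw [swap_sub, swapVars_mul, swap_bb hij r, swap_X hij]
  linear_combination bb_mul_sub hij r

theorem swap_r_eq (hij : i ≠ j) (r : MvPowerSeries (Fin n) S) :
    swapVars i j r = (r - bb i j r * MvPowerSeries.X i) + bb i j r * MvPowerSeries.X j := by
  linear_combination bb_mul_sub hij r

set_option synthInstance.maxHeartbeats 1000000 in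
open TensorProduct in
theorem fixed_tmul (i j : Fin n) (z : MvPowerSeries (Fin n) S) (hz : swapVars i j z = z)
    (x y : MvPowerSeries (Fin n) S) :
    (z * x) ⊗ₜ[fixedSubalgebra S i j] y = x ⊗ₜ[fixedSubalgebra S i j] (z * y) := by
  have h : ∀ w : MvPowerSeries (Fin n) S,
      (⟨z, hz⟩ : fixedSubalgebra S i j) • w = z * w := fun w => rfl
  rw [← h x, ← h y, TensorProduct.smul_tmul]


theorem swapVars_comm (i j : Fin n) (f : MvPowerSeries (Fin n) S) :
    swapVars i j f = swapVars j i f := by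
  unfold swapVars
  rw [Equiv.swap_comm]

theorem swap_X' (hij : i ≠ j) :
    swapVars i j (MvPowerSeries.X j : MvPowerSeries (Fin n) S) = MvPowerSeries.X i := by
  rw [swapVars_comm]
  exact swap_X (Ne.symm hij)

open TensorProduct in
theorem tmul_mul (i j : Fin n) (x₁ y₁ x₂ y₂ : MvPowerSeries (Fin n) S) :
    (x₁ ⊗ₜ[fixedSubalgebra S i j] y₁) * (x₂ ⊗ₜ[fixedSubalgebra S i j] y₂)
      = (x₁ * x₂) ⊗ₜ[fixedSubalgebra S i j] (y₁ * y₂) :=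
  Algebra.TensorProduct.tmul_mul_tmul _ _ _ _

open TensorProduct in
theorem hk1 (hij : i ≠ j) :
    ((MvPowerSeries.X i : MvPowerSeries (Fin n) S) ⊗ₜ[fixedSubalgebra S i j]
        (1 : MvPowerSeries (Fin n) S)
      - (1 : MvPowerSeries (Fin n) S) ⊗ₜ[fixedSubalgebra S i j] (MvPowerSeries.X i : MvPowerSeries (Fin n) S))
      * ((1 : MvPowerSeries (Fin n) S) ⊗ₜ[fixedSubalgebra S i j] (MvPowerSeries.X i : MvPowerSeries (Fin n) S)
      - MvPowerSeries.X j ⊗ₜ[fixedSubalgebra S i j] (1 : MvPowerSeries (Fin n) S)) = 0 := by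
  have hfix2 : swapVars i j (MvPowerSeries.X i * MvPowerSeries.X j : MvPowerSeries (Fin n) S)
      = MvPowerSeries.X i * MvPowerSeries.X j := by
    rw [swapVars_mul, swap_X hij, swap_X' hij]; exact mul_comm _ _
  have hfix1 : swapVars i j (MvPowerSeries.X i + MvPowerSeries.X j : MvPowerSeries (Fin n) S)
      = MvPowerSeries.X i + MvPowerSeries.X j := by
    rw [swapVars_add, swap_X hij, swap_X' hij]; exact add_comm _ _
  have h3 := fixed_tmul i j _ hfix2 1 1
  simp only [mul_one] at h3
  have h4 := fixed_tmul i j _ hfix1 1 (MvPowerSeries.X i)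
  simp only [mul_one] at h4
  rw [TensorProduct.add_tmul, add_mul, TensorProduct.tmul_add,
    mul_comm (MvPowerSeries.X j : MvPowerSeries (Fin n) S) (MvPowerSeries.X i)] at h4
  have p1 : ((MvPowerSeries.X i : MvPowerSeries (Fin n) S) ⊗ₜ[fixedSubalgebra S i j]
        (1 : MvPowerSeries (Fin n) S))
      * ((1 : MvPowerSeries (Fin n) S) ⊗ₜ[fixedSubalgebra S i j] (MvPowerSeries.X i : MvPowerSeries (Fin n) S))
      = MvPowerSeries.X i ⊗ₜ[fixedSubalgebra S i j] (MvPowerSeries.X i : MvPowerSeries (Fin n) S) := by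
    simp only [tmul_mul, mul_one, one_mul]
  have p2 : ((MvPowerSeries.X i : MvPowerSeries (Fin n) S) ⊗ₜ[fixedSubalgebra S i j]
        (1 : MvPowerSeries (Fin n) S))
      * (MvPowerSeries.X j ⊗ₜ[fixedSubalgebra S i j] (1 : MvPowerSeries (Fin n) S))
      = (MvPowerSeries.X i * MvPowerSeries.X j) ⊗ₜ[fixedSubalgebra S i j]
          (1 : MvPowerSeries (Fin n) S) := by
    simp only [tmul_mul, mul_one, one_mul]
  have p3 : (((1 : MvPowerSeries (Fin n) S)) ⊗ₜ[fixedSubalgebra S i j] (MvPowerSeries.X i : MvPowerSeries (Fin n) S))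
      * ((1 : MvPowerSeries (Fin n) S) ⊗ₜ[fixedSubalgebra S i j] (MvPowerSeries.X i : MvPowerSeries (Fin n) S))
      = (1 : MvPowerSeries (Fin n) S) ⊗ₜ[fixedSubalgebra S i j]
          (MvPowerSeries.X i * MvPowerSeries.X i) := by
    simp only [tmul_mul, mul_one, one_mul]
  have p4 : (((1 : MvPowerSeries (Fin n) S)) ⊗ₜ[fixedSubalgebra S i j] (MvPowerSeries.X i : MvPowerSeries (Fin n) S))
      * (MvPowerSeries.X j ⊗ₜ[fixedSubalgebra S i j] (1 : MvPowerSeries (Fin n) S))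
      = MvPowerSeries.X j ⊗ₜ[fixedSubalgebra S i j] (MvPowerSeries.X i : MvPowerSeries (Fin n) S) := by
    simp only [tmul_mul, mul_one, one_mul]
  linear_combination p1 - p2 - p3 + p4 + h4 - h3

open TensorProduct in
theorem hk2 (hij : i ≠ j) :
    ((MvPowerSeries.X i : MvPowerSeries (Fin n) S) ⊗ₜ[fixedSubalgebra S i j]
        (1 : MvPowerSeries (Fin n) S)
      - (1 : MvPowerSeries (Fin n) S) ⊗ₜ[fixedSubalgebra S i j] (MvPowerSeries.X j : MvPowerSeries (Fin n) S))
      * ((1 : MvPowerSeries (Fin n) S) ⊗ₜ[fixedSubalgebra S i j] (MvPowerSeries.X i : MvPowerSeries (Fin n) S)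
      - MvPowerSeries.X i ⊗ₜ[fixedSubalgebra S i j] (1 : MvPowerSeries (Fin n) S)) = 0 := by
  have hfix2 : swapVars i j (MvPowerSeries.X j * MvPowerSeries.X i : MvPowerSeries (Fin n) S)
      = MvPowerSeries.X j * MvPowerSeries.X i := by
    rw [swapVars_mul, swap_X hij, swap_X' hij]; exact mul_comm _ _
  have hfix1 : swapVars i j (MvPowerSeries.X i + MvPowerSeries.X j : MvPowerSeries (Fin n) S)
      = MvPowerSeries.X i + MvPowerSeries.X j := by
    rw [swapVars_add, swap_X hij, swap_X' hij]; exact add_comm _ _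
  have h3 := fixed_tmul i j _ hfix2 1 1
  simp only [mul_one] at h3
  have h4 := fixed_tmul i j _ hfix1 (MvPowerSeries.X i) 1
  simp only [mul_one] at h4
  rw [TensorProduct.tmul_add, add_mul, TensorProduct.add_tmul] at h4
  have p1 : ((MvPowerSeries.X i : MvPowerSeries (Fin n) S) ⊗ₜ[fixedSubalgebra S i j]
        (1 : MvPowerSeries (Fin n) S))
      * ((1 : MvPowerSeries (Fin n) S) ⊗ₜ[fixedSubalgebra S i j] (MvPowerSeries.X i : MvPowerSeries (Fin n) S))
      = MvPowerSeries.X i ⊗ₜ[fixedSubalgebra S i j] (MvPowerSeries.X i : MvPowerSeries (Fin n) S) := by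
    simp only [tmul_mul, mul_one, one_mul]
  have p2 : ((MvPowerSeries.X i : MvPowerSeries (Fin n) S) ⊗ₜ[fixedSubalgebra S i j]
        (1 : MvPowerSeries (Fin n) S))
      * (MvPowerSeries.X i ⊗ₜ[fixedSubalgebra S i j] (1 : MvPowerSeries (Fin n) S))
      = (MvPowerSeries.X i * MvPowerSeries.X i) ⊗ₜ[fixedSubalgebra S i j]
          (1 : MvPowerSeries (Fin n) S) := by
    simp only [tmul_mul, mul_one, one_mul]
  have p3 : (((1 : MvPowerSeries (Fin n) S)) ⊗ₜ[fixedSubalgebra S i j] (MvPowerSeries.X j : MvPowerSeries (Fin n) S))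
      * ((1 : MvPowerSeries (Fin n) S) ⊗ₜ[fixedSubalgebra S i j] (MvPowerSeries.X i : MvPowerSeries (Fin n) S))
      = (1 : MvPowerSeries (Fin n) S) ⊗ₜ[fixedSubalgebra S i j]
          (MvPowerSeries.X j * MvPowerSeries.X i) := by
    simp only [tmul_mul, mul_one, one_mul]
  have p4 : (((1 : MvPowerSeries (Fin n) S)) ⊗ₜ[fixedSubalgebra S i j] (MvPowerSeries.X j : MvPowerSeries (Fin n) S))
      * (MvPowerSeries.X i ⊗ₜ[fixedSubalgebra S i j] (1 : MvPowerSeries (Fin n) S))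
      = MvPowerSeries.X i ⊗ₜ[fixedSubalgebra S i j] (MvPowerSeries.X j : MvPowerSeries (Fin n) S) := by
    simp only [tmul_mul, mul_one, one_mul]
  linear_combination p1 - p2 - p3 + p4 - h4 + h3

open TensorProduct in
theorem diff_eq1 (i j : Fin n) (a b : MvPowerSeries (Fin n) S)
    (ha : swapVars i j a = a) (hb : swapVars i j b = b) :
    (a + b * MvPowerSeries.X i) ⊗ₜ[fixedSubalgebra S i j] (1 : MvPowerSeries (Fin n) S)
      - (1 : MvPowerSeries (Fin n) S) ⊗ₜ[fixedSubalgebra S i j] (a + b * MvPowerSeries.X i)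
    = (b ⊗ₜ[fixedSubalgebra S i j] (1 : MvPowerSeries (Fin n) S))
      * ((MvPowerSeries.X i : MvPowerSeries (Fin n) S) ⊗ₜ[fixedSubalgebra S i j]
          (1 : MvPowerSeries (Fin n) S)
        - (1 : MvPowerSeries (Fin n) S) ⊗ₜ[fixedSubalgebra S i j] (MvPowerSeries.X i : MvPowerSeries (Fin n) S)) := by
  have hA := fixed_tmul i j a ha 1 1
  simp only [mul_one] at hA
  have hB := fixed_tmul i j b hb 1 (MvPowerSeries.X i)
  simp only [mul_one] at hB
  have r1 : (a + b * MvPowerSeries.X i) ⊗ₜ[fixedSubalgebra S i j]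
        (1 : MvPowerSeries (Fin n) S)
      = a ⊗ₜ[fixedSubalgebra S i j] (1 : MvPowerSeries (Fin n) S)
        + (b * MvPowerSeries.X i) ⊗ₜ[fixedSubalgebra S i j] (1 : MvPowerSeries (Fin n) S) :=
    TensorProduct.add_tmul _ _ _
  have r2 : (1 : MvPowerSeries (Fin n) S) ⊗ₜ[fixedSubalgebra S i j]
        (a + b * MvPowerSeries.X i)
      = (1 : MvPowerSeries (Fin n) S) ⊗ₜ[fixedSubalgebra S i j] a
        + (1 : MvPowerSeries (Fin n) S) ⊗ₜ[fixedSubalgebra S i j] (b * MvPowerSeries.X i) :=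
    TensorProduct.tmul_add _ _ _
  have q1 : (b ⊗ₜ[fixedSubalgebra S i j] (1 : MvPowerSeries (Fin n) S))
      * ((MvPowerSeries.X i : MvPowerSeries (Fin n) S) ⊗ₜ[fixedSubalgebra S i j]
          (1 : MvPowerSeries (Fin n) S))
      = (b * MvPowerSeries.X i) ⊗ₜ[fixedSubalgebra S i j] (1 : MvPowerSeries (Fin n) S) := by
    simp only [tmul_mul, mul_one, one_mul]
  have q2 : (b ⊗ₜ[fixedSubalgebra S i j] (1 : MvPowerSeries (Fin n) S))
      * ((1 : MvPowerSeries (Fin n) S) ⊗ₜ[fixedSubalgebra S i j] (MvPowerSeries.X i : MvPowerSeries (Fin n) S))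
      = b ⊗ₜ[fixedSubalgebra S i j] (MvPowerSeries.X i : MvPowerSeries (Fin n) S) := by
    simp only [tmul_mul, mul_one, one_mul]
  linear_combination r1 - r2 + hA + hB - q1 + q2

open TensorProduct in
theorem diff_eq2 (i j : Fin n) (a b : MvPowerSeries (Fin n) S)
    (ha : swapVars i j a = a) (hb : swapVars i j b = b) :
    (a + b * MvPowerSeries.X i) ⊗ₜ[fixedSubalgebra S i j] (1 : MvPowerSeries (Fin n) S)
      - (1 : MvPowerSeries (Fin n) S) ⊗ₜ[fixedSubalgebra S i j] (a + b * MvPowerSeries.X j)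
    = (b ⊗ₜ[fixedSubalgebra S i j] (1 : MvPowerSeries (Fin n) S))
      * ((MvPowerSeries.X i : MvPowerSeries (Fin n) S) ⊗ₜ[fixedSubalgebra S i j]
          (1 : MvPowerSeries (Fin n) S)
        - (1 : MvPowerSeries (Fin n) S) ⊗ₜ[fixedSubalgebra S i j] (MvPowerSeries.X j : MvPowerSeries (Fin n) S)) := by
  have hA := fixed_tmul i j a ha 1 1
  simp only [mul_one] at hA
  have hB := fixed_tmul i j b hb 1 (MvPowerSeries.X j)
  simp only [mul_one] at hB
  have r1 : (a + b * MvPowerSeries.X i) ⊗ₜ[fixedSubalgebra S i j]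
        (1 : MvPowerSeries (Fin n) S)
      = a ⊗ₜ[fixedSubalgebra S i j] (1 : MvPowerSeries (Fin n) S)
        + (b * MvPowerSeries.X i) ⊗ₜ[fixedSubalgebra S i j] (1 : MvPowerSeries (Fin n) S) :=
    TensorProduct.add_tmul _ _ _
  have r2 : (1 : MvPowerSeries (Fin n) S) ⊗ₜ[fixedSubalgebra S i j]
        (a + b * MvPowerSeries.X j)
      = (1 : MvPowerSeries (Fin n) S) ⊗ₜ[fixedSubalgebra S i j] a
        + (1 : MvPowerSeries (Fin n) S) ⊗ₜ[fixedSubalgebra S i j] (b * MvPowerSeries.X j) :=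
    TensorProduct.tmul_add _ _ _
  have q1 : (b ⊗ₜ[fixedSubalgebra S i j] (1 : MvPowerSeries (Fin n) S))
      * ((MvPowerSeries.X i : MvPowerSeries (Fin n) S) ⊗ₜ[fixedSubalgebra S i j]
          (1 : MvPowerSeries (Fin n) S))
      = (b * MvPowerSeries.X i) ⊗ₜ[fixedSubalgebra S i j] (1 : MvPowerSeries (Fin n) S) := by
    simp only [tmul_mul, mul_one, one_mul]
  have q2 : (b ⊗ₜ[fixedSubalgebra S i j] (1 : MvPowerSeries (Fin n) S))
      * ((1 : MvPowerSeries (Fin n) S) ⊗ₜ[fixedSubalgebra S i j] (MvPowerSeries.X j : MvPowerSeries (Fin n) S))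
      = b ⊗ₜ[fixedSubalgebra S i j] (MvPowerSeries.X j : MvPowerSeries (Fin n) S) := by
    simp only [tmul_mul, mul_one, one_mul]
  linear_combination r1 - r2 + hA + hB - q1 + q2

end XiHelpers

/-- the exchange identities `(r ⊗ 1)·ξ = (1 ⊗ r)·ξ` and
`(r ⊗ 1)·ξ' = (1 ⊗ s_i(r))·ξ'` in `A = R ⊗_{R^{s_i}} R`. -/
theorem xi_exchange_identities
    (F : MvPowerSeries (Fin 2) S) (hF : IsFormalGroupLaw F)
    (ι : MvPowerSeries (Fin 1) S) (hι : IsFormalInverse F ι)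
    (g : MvPowerSeries (Fin 2) S)
    (hg : (X 0 : MvPowerSeries (Fin 2) S) - X 1 = fsub F ι (X 0) (X 1) * g)
    (hgu : IsUnit g)
    {n : ℕ} (i j : Fin n) (hij : (i : ℕ) + 1 = (j : ℕ))
    (r : MvPowerSeries (Fin n) S) :
    (r ⊗ₜ[fixedSubalgebra S i j] (1 : MvPowerSeries (Fin n) S)) * xiElt g i j
      = ((1 : MvPowerSeries (Fin n) S) ⊗ₜ[fixedSubalgebra S i j] r) * xiElt g i j ∧
    (r ⊗ₜ[fixedSubalgebra S i j] (1 : MvPowerSeries (Fin n) S)) * xiElt' g i j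
      = ((1 : MvPowerSeries (Fin n) S) ⊗ₜ[fixedSubalgebra S i j] swapVars i j r)
          * xiElt' g i j := by
  have hij' : i ≠ j := by
    intro h
    rw [h] at hij
    omega
  have hb : swapVars i j (XiHelpers.bb i j r) = XiHelpers.bb i j r :=
    XiHelpers.swap_bb hij' r
  have ha : swapVars i j (r - XiHelpers.bb i j r * X i)
      = r - XiHelpers.bb i j r * X i := XiHelpers.swap_aa hij' r
  have hre : (r - XiHelpers.bb i j r * X i) + XiHelpers.bb i j r * X i = r := by ring
  constructor
  · have hd := XiHelpers.diff_eq1 i j (r - XiHelpers.bb i j r * X i)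
      (XiHelpers.bb i j r) ha hb
    rw [hre] at hd
    have hz := XiHelpers.hk1 (S := S) hij'
    unfold xiElt
    linear_combination
      ((Ring.inverse (gsub g (X i) (X j)) ⊗ₜ[fixedSubalgebra S i j]
          (1 : MvPowerSeries (Fin n) S))
        * ((1 : MvPowerSeries (Fin n) S) ⊗ₜ[fixedSubalgebra S i j] (X i)
          - (X j) ⊗ₜ[fixedSubalgebra S i j] (1 : MvPowerSeries (Fin n) S))) * hd
      + ((Ring.inverse (gsub g (X i) (X j)) ⊗ₜ[fixedSubalgebra S i j]
          (1 : MvPowerSeries (Fin n) S))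
        * (XiHelpers.bb i j r ⊗ₜ[fixedSubalgebra S i j]
          (1 : MvPowerSeries (Fin n) S))) * hz
  · have hd2 := XiHelpers.diff_eq2 i j (r - XiHelpers.bb i j r * X i)
      (XiHelpers.bb i j r) ha hb
    rw [hre, ← XiHelpers.swap_r_eq hij' r] at hd2
    have hz2 := XiHelpers.hk2 (S := S) hij'
    unfold xiElt'
    linear_combination
      ((Ring.inverse (gsub g (X j) (X i)) ⊗ₜ[fixedSubalgebra S i j]
          (1 : MvPowerSeries (Fin n) S))
        * ((1 : MvPowerSeries (Fin n) S) ⊗ₜ[fixedSubalgebra S i j] (X i)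
          - (X i) ⊗ₜ[fixedSubalgebra S i j] (1 : MvPowerSeries (Fin n) S))) * hd2
      + ((Ring.inverse (gsub g (X j) (X i)) ⊗ₜ[fixedSubalgebra S i j]
          (1 : MvPowerSeries (Fin n) S))
        * (XiHelpers.bb i j r ⊗ₜ[fixedSubalgebra S i j]
          (1 : MvPowerSeries (Fin n) S))) * hz2

end
end
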